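/- Let γ1, γ2 ∈ (0,1), let τ be a transition function on (S, A) that is non-trivial, assume every state is reachable in the environment (S, A, τ, ι, γ2), and let X be any type. Suppose f : ℛ → X satisfies f(R1) = f(R2) whenever R2 is a potential shaping of R1 with discount γ1. If γ1 ≠ γ2, then f is not ≡_OPT-admissible, where ≡_OPT is the equivalence relation of having the same optimal policies in the environment (S, A, τ, ι, γ2). -/

import Mathlib

open scoped BigOperators

/-- A probability vector on a finite type. -/
def IsProbVec {X : Type} [Fintype X] (p : X → ℝ) : Prop :=
  (∀ x, 0 ≤ p x) ∧ ∑ x, p x = 1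

/-- A (stationary) policy: a probability vector over actions for each state. -/
def Policy (S A : Type) [Fintype A] : Type :=
  {p : S → A → ℝ // ∀ s, IsProbVec (p s)}

/-- The transition matrix `P_π` induced by a policy `π` under transition function `τ`. -/
noncomputable def Pmat {S A : Type} [Fintype S] [Fintype A]
    (τ : S → A → S → ℝ) (π : Policy S A) : Matrix S S ℝ :=
  Matrix.of fun s s' => ∑ a, π.1 s a * τ s a s'

/-- The state distribution `ι P_π^t` at time `t`. -/
noncomputable def stateDist {S A : Type} [Fintype S] [DecidableEq S] [Fintype A]
    (τ : S → A → S → ℝ) (ι : S → ℝ) (π : Policy S A) (t : ℕ) : S → ℝ :=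
  Matrix.vecMul ι (Pmat τ π ^ t)

/-- The expected one-step reward `r_{R,π}`. -/
noncomputable def rvec {S A : Type} [Fintype S] [Fintype A]
    (τ : S → A → S → ℝ) (R : S → A → S → ℝ) (π : Policy S A) (s : S) : ℝ :=
  ∑ a, π.1 s a * ∑ s', τ s a s' * R s a s'

/-- The policy evaluation function `J_R(π)`. -/
noncomputable def Jval {S A : Type} [Fintype S] [DecidableEq S] [Fintype A]
    (τ : S → A → S → ℝ) (ι : S → ℝ) (γ : ℝ) (R : S → A → S → ℝ)
    (π : Policy S A) : ℝ :=
  ∑' t : ℕ, γ ^ t * ∑ s, stateDist τ ι π t s * rvec τ R π s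

/-- Every state is reachable under `τ` and `ι`. -/
def AllReachable {S A : Type} [Fintype S] [DecidableEq S] [Fintype A]
    (τ : S → A → S → ℝ) (ι : S → ℝ) : Prop :=
  ∀ s : S, ∃ (π : Policy S A) (t : ℕ), 0 < stateDist τ ι π t s

/-- `π` is an optimal policy for `R`. -/
def IsOptimal {S A : Type} [Fintype S] [DecidableEq S] [Fintype A]
    (τ : S → A → S → ℝ) (ι : S → ℝ) (γ : ℝ) (R : S → A → S → ℝ)
    (π : Policy S A) : Prop :=
  ∀ π' : Policy S A, Jval τ ι γ R π' ≤ Jval τ ι γ R π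

/-- `R₁ ≡_OPT R₂`: the same policies are optimal for `R₁` and `R₂`. -/
def EquivOPT {S A : Type} [Fintype S] [DecidableEq S] [Fintype A]
    (τ : S → A → S → ℝ) (ι : S → ℝ) (γ : ℝ) (R₁ R₂ : S → A → S → ℝ) : Prop :=
  ∀ π : Policy S A, IsOptimal τ ι γ R₁ π ↔ IsOptimal τ ι γ R₂ π

/-- `R₁ ≡_ORD R₂`: `R₁` and `R₂` induce the same ordering of policies. -/
def EquivORD {S A : Type} [Fintype S] [DecidableEq S] [Fintype A]
    (τ : S → A → S → ℝ) (ι : S → ℝ) (γ : ℝ) (R₁ R₂ : S → A → S → ℝ) : Prop :=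
  ∀ π π' : Policy S A,
    (Jval τ ι γ R₁ π' < Jval τ ι γ R₁ π ↔ Jval τ ι γ R₂ π' < Jval τ ι γ R₂ π)

/-- `f` is `P`-admissible: `f R₁ = f R₂` implies `P R₁ R₂`. -/
def PAdmissible {R : Type*} {X : Type*} (P : R → R → Prop) (f : R → X) : Prop :=
  ∀ R₁ R₂ : R, f R₁ = f R₂ → P R₁ R₂

/-- `f` is `P`-robust to misspecification with `g`. -/
def PRobust {R : Type*} {X : Type*} (P : R → R → Prop) (f g : R → X) : Prop :=
  PAdmissible P f ∧ f ≠ g ∧ Set.range g ⊆ Set.range f ∧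
    ∀ R₁ R₂ : R, f R₁ = g R₂ → P R₁ R₂

/-- `R₂` is an S'-redistribution of `R₁` with respect to `τ`. -/
def SRedistrib {S A : Type} [Fintype S] [Fintype A]
    (τ : S → A → S → ℝ) (R₁ R₂ : S → A → S → ℝ) : Prop :=
  ∀ s a, ∑ s', τ s a s' * R₁ s a s' = ∑ s', τ s a s' * R₂ s a s'

/-- `R₂` is a potential shaping of `R₁` with discount `γ'`. -/
def PotentialShaping {S A : Type} (γ' : ℝ) (R₁ R₂ : S → A → S → ℝ) : Prop :=
  ∃ Φ : S → ℝ, ∀ s a s', R₂ s a s' = R₁ s a s' + γ' * Φ s' - Φ s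

-- helpers
lemma Pmat_row_prob {S A : Type} [Fintype S] [Fintype A]
    (τ : S → A → S → ℝ) (hτ : ∀ s a, IsProbVec (τ s a)) (π : Policy S A) (s : S) :
    IsProbVec (fun s' => Pmat τ π s s') := by
  constructor
  · intro s'
    exact Finset.sum_nonneg fun a _ => mul_nonneg ((π.2 s).1 a) ((hτ s a).1 s')
  · simp only [Pmat, Matrix.of_apply]
    rw [Finset.sum_comm]
    simp only [← Finset.mul_sum]
    calc (∑ a, π.1 s a * ∑ s', τ s a s') = ∑ a, π.1 s a := by
          apply Finset.sum_congr rfl; intro a _; rw [(hτ s a).2, mul_one]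
      _ = 1 := (π.2 s).2

lemma stateDist_succ {S A : Type} [Fintype S] [DecidableEq S] [Fintype A]
    (τ : S → A → S → ℝ) (ι : S → ℝ) (π : Policy S A) (t : ℕ) (s' : S) :
    stateDist τ ι π (t+1) s' = ∑ s, stateDist τ ι π t s * Pmat τ π s s' := by
  unfold stateDist
  rw [pow_succ, ← Matrix.vecMul_vecMul]
  simp [Matrix.vecMul, dotProduct]

lemma stateDist_zero {S A : Type} [Fintype S] [DecidableEq S] [Fintype A]
    (τ : S → A → S → ℝ) (ι : S → ℝ) (π : Policy S A) :
    stateDist τ ι π 0 = ι := by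
  unfold stateDist; rw [pow_zero, Matrix.vecMul_one]

lemma stateDist_prob {S A : Type} [Fintype S] [DecidableEq S] [Fintype A]
    (τ : S → A → S → ℝ) (hτ : ∀ s a, IsProbVec (τ s a)) (ι : S → ℝ) (hι : IsProbVec ι)
    (π : Policy S A) (t : ℕ) : IsProbVec (stateDist τ ι π t) := by
  induction t with
  | zero => rw [stateDist_zero]; exact hι
  | succ t ih =>
    constructor
    · intro s'
      rw [stateDist_succ]
      exact Finset.sum_nonneg fun s _ => mul_nonneg (ih.1 s) ((Pmat_row_prob τ hτ π s).1 s')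
    · have : ∀ s', stateDist τ ι π (t+1) s' = ∑ s, stateDist τ ι π t s * Pmat τ π s s' :=
        stateDist_succ τ ι π t
      simp only [this]
      rw [Finset.sum_comm]
      simp only [← Finset.mul_sum]
      calc (∑ s, stateDist τ ι π t s * ∑ s', Pmat τ π s s') = ∑ s, stateDist τ ι π t s := by
            apply Finset.sum_congr rfl; intro s _
            rw [(Pmat_row_prob τ hτ π s).2, mul_one]
        _ = 1 := ih.2

lemma stateDist_le_one {S A : Type} [Fintype S] [DecidableEq S] [Fintype A]
    (τ : S → A → S → ℝ) (hτ : ∀ s a, IsProbVec (τ s a)) (ι : S → ℝ) (hι : IsProbVec ι)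
    (π : Policy S A) (t : ℕ) (s : S) : stateDist τ ι π t s ≤ 1 := by
  have h := stateDist_prob τ hτ ι hι π t
  calc stateDist τ ι π t s ≤ ∑ s', stateDist τ ι π t s' :=
        Finset.single_le_sum (fun s' _ => h.1 s') (Finset.mem_univ s)
    _ = 1 := h.2

lemma summable_geom_mul {γ : ℝ} (h0 : 0 ≤ γ) (h1 : γ < 1) (c : ℕ → ℝ) (C : ℝ)
    (hc : ∀ t, |c t| ≤ C) : Summable (fun t => γ ^ t * c t) := by
  apply Summable.of_norm_bounded
    ((summable_geometric_of_lt_one h0 h1).mul_left C)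
  intro t
  rw [Real.norm_eq_abs, abs_mul, abs_pow, abs_of_nonneg h0, mul_comm C]
  exact mul_le_mul_of_nonneg_left (hc t) (pow_nonneg h0 t)

section Core
variable {S A : Type} [Fintype S] [DecidableEq S] [Fintype A]
  (τ : S → A → S → ℝ) (ι : S → ℝ)

lemma summable_occ {γ : ℝ} (h0 : 0 < γ) (h1 : γ < 1)
    (hτ : ∀ s a, IsProbVec (τ s a)) (hι : IsProbVec ι) (π : Policy S A) (s : S) :
    Summable (fun t : ℕ => γ ^ t * stateDist τ ι π t s) := by
  apply summable_geom_mul h0.le h1 _ 1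
  intro t
  rw [abs_of_nonneg ((stateDist_prob τ hτ ι hι π t).1 s)]
  exact stateDist_le_one τ hτ ι hι π t s

/-- discounted occupancy -/
noncomputable def occ (γ : ℝ) (π : Policy S A) (s : S) : ℝ :=
  ∑' t : ℕ, γ ^ t * stateDist τ ι π t s

lemma occ_pos {γ : ℝ} (h0 : 0 < γ) (h1 : γ < 1)
    (hτ : ∀ s a, IsProbVec (τ s a)) (hι : IsProbVec ι) (π : Policy S A) (s : S)
    (t : ℕ) (ht : 0 < stateDist τ ι π t s) : 0 < occ τ ι γ π s := by
  have hsum := summable_occ τ ι h0 h1 hτ hι π s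
  have hle := Summable.le_tsum hsum t (fun j _ =>
    mul_nonneg (pow_nonneg h0.le j) ((stateDist_prob τ hτ ι hι π j).1 s))
  have : 0 < γ ^ t * stateDist τ ι π t s := mul_pos (pow_pos h0 t) ht
  exact lt_of_lt_of_le this hle

lemma occ_recur {γ : ℝ} (h0 : 0 < γ) (h1 : γ < 1)
    (hτ : ∀ s a, IsProbVec (τ s a)) (hι : IsProbVec ι) (π : Policy S A) (s' : S) :
    occ τ ι γ π s' = ι s' + γ * ∑ s, occ τ ι γ π s * Pmat τ π s s' := by
  have hsum := summable_occ τ ι h0 h1 hτ hι π s'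
  have step : ∀ t : ℕ, γ ^ (t+1) * stateDist τ ι π (t+1) s'
      = γ * ∑ s, (γ ^ t * stateDist τ ι π t s) * Pmat τ π s s' := by
    intro t
    rw [stateDist_succ, Finset.mul_sum, Finset.mul_sum]
    apply Finset.sum_congr rfl; intro s _; ring
  have hsum2 : ∀ s, Summable (fun t : ℕ => (γ ^ t * stateDist τ ι π t s) * Pmat τ π s s') :=
    fun s => (summable_occ τ ι h0 h1 hτ hι π s).mul_right _
  calc occ τ ι γ π s'
      = γ ^ 0 * stateDist τ ι π 0 s' + ∑' t : ℕ, γ ^ (t+1) * stateDist τ ι π (t+1) s' :=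
        Summable.tsum_eq_zero_add hsum
    _ = ι s' + ∑' t : ℕ, γ * ∑ s, (γ ^ t * stateDist τ ι π t s) * Pmat τ π s s' := by
        rw [pow_zero, one_mul, stateDist_zero]
        congr 1
        exact tsum_congr step
    _ = ι s' + γ * ∑ s, occ τ ι γ π s * Pmat τ π s s' := by
        rw [tsum_mul_left]
        congr 1
        rw [Summable.tsum_finsetSum (fun s _ => hsum2 s)]
        congr 1
        apply Finset.sum_congr rfl; intro s _
        rw [tsum_mul_right]
        rfl

end Core

section Jv
variable {S A : Type} [Fintype S] [DecidableEq S] [Fintype A]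
  (τ : S → A → S → ℝ) (ι : S → ℝ)

lemma Jval_zero (γ : ℝ) (π : Policy S A) :
    Jval τ ι γ (fun _ _ _ => 0) π = 0 := by
  unfold Jval rvec
  simp

lemma Jval_shaping (γ₁ : ℝ) {γ₂ : ℝ} (h0 : 0 < γ₂) (h1 : γ₂ < 1)
    (hτ : ∀ s a, IsProbVec (τ s a)) (hι : IsProbVec ι) (Φ : S → ℝ) (π : Policy S A) :
    Jval τ ι γ₂ (fun s _ s' => γ₁ * Φ s' - Φ s) π
      = (γ₁ / γ₂ - 1) * ∑ s, occ τ ι γ₂ π s * Φ s - (γ₁ / γ₂) * ∑ s, ι s * Φ s := by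
  set d := stateDist τ ι π with hd
  set u : ℕ → ℝ := fun t => ∑ s, d t s * Φ s with hu
  have hubound : ∀ t, |u t| ≤ ∑ s, |Φ s| := by
    intro t
    calc |u t| ≤ ∑ s, |d t s * Φ s| := Finset.abs_sum_le_sum_abs _ _
      _ ≤ ∑ s, |Φ s| := by
          apply Finset.sum_le_sum; intro s _
          rw [abs_mul, abs_of_nonneg ((stateDist_prob τ hτ ι hι π t).1 s)]
          calc d t s * |Φ s| ≤ 1 * |Φ s| :=
                mul_le_mul_of_nonneg_right (stateDist_le_one τ hτ ι hι π t s) (abs_nonneg _)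
            _ = |Φ s| := one_mul _
  have hsumu : Summable (fun t : ℕ => γ₂ ^ t * u t) :=
    summable_geom_mul h0.le h1 u _ hubound
  have hsumu' : Summable (fun t : ℕ => γ₂ ^ t * u (t+1)) :=
    summable_geom_mul h0.le h1 _ _ (fun t => hubound (t+1))
  -- rvec computation
  have hrv : ∀ s, rvec τ (fun s _ s' => γ₁ * Φ s' - Φ s) π s
      = γ₁ * (∑ s', Pmat τ π s s' * Φ s') - Φ s := by
    intro s
    unfold rvec
    have : ∀ a, ∑ s', τ s a s' * (γ₁ * Φ s' - Φ s)
        = γ₁ * (∑ s', τ s a s' * Φ s') - Φ s := by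
      intro a
      calc ∑ s', τ s a s' * (γ₁ * Φ s' - Φ s)
          = ∑ s', (γ₁ * (τ s a s' * Φ s') - τ s a s' * Φ s) :=
            Finset.sum_congr rfl (fun s' _ => by ring)
        _ = γ₁ * (∑ s', τ s a s' * Φ s') - (∑ s', τ s a s') * Φ s := by
            rw [Finset.sum_sub_distrib, ← Finset.mul_sum, ← Finset.sum_mul]
        _ = γ₁ * (∑ s', τ s a s' * Φ s') - Φ s := by rw [(hτ s a).2, one_mul]
    simp only [this]
    have hπ := (π.2 s).2
    calc ∑ a, π.1 s a * (γ₁ * (∑ s', τ s a s' * Φ s') - Φ s)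
        = γ₁ * (∑ a, π.1 s a * ∑ s', τ s a s' * Φ s') - (∑ a, π.1 s a) * Φ s := by
          rw [Finset.mul_sum, Finset.sum_mul, ← Finset.sum_sub_distrib]
          apply Finset.sum_congr rfl; intro a _; ring
      _ = γ₁ * (∑ s', Pmat τ π s s' * Φ s') - Φ s := by
          rw [hπ, one_mul]
          congr 2
          calc ∑ a, π.1 s a * ∑ s', τ s a s' * Φ s'
              = ∑ a, ∑ s', π.1 s a * (τ s a s' * Φ s') := by
                apply Finset.sum_congr rfl; intro a _; rw [Finset.mul_sum]
            _ = ∑ s', ∑ a, π.1 s a * (τ s a s' * Φ s') := Finset.sum_comm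
            _ = ∑ s', Pmat τ π s s' * Φ s' := by
                apply Finset.sum_congr rfl; intro s' _
                simp only [Pmat, Matrix.of_apply, Finset.sum_mul]
                apply Finset.sum_congr rfl; intro a _; ring
  -- inner sum at each time step
  have hinner : ∀ t, ∑ s, d t s * rvec τ (fun s _ s' => γ₁ * Φ s' - Φ s) π s
      = γ₁ * u (t+1) - u t := by
    intro t
    simp only [hrv]
    calc ∑ s, d t s * (γ₁ * (∑ s', Pmat τ π s s' * Φ s') - Φ s)
        = γ₁ * (∑ s, d t s * ∑ s', Pmat τ π s s' * Φ s') - u t := by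
          rw [hu, Finset.mul_sum, ← Finset.sum_sub_distrib]
          apply Finset.sum_congr rfl; intro s _; ring
      _ = γ₁ * u (t+1) - u t := by
          congr 2
          rw [hu]
          have hds : ∀ s', d (t+1) s' = ∑ s, d t s * Pmat τ π s s' := stateDist_succ τ ι π t
          simp only [hds]
          calc ∑ s, d t s * ∑ s', Pmat τ π s s' * Φ s'
              = ∑ s, ∑ s', d t s * Pmat τ π s s' * Φ s' := by
                apply Finset.sum_congr rfl; intro s _
                rw [Finset.mul_sum]
                apply Finset.sum_congr rfl; intro s' _; ring
            _ = ∑ s', ∑ s, d t s * Pmat τ π s s' * Φ s' := Finset.sum_comm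
            _ = ∑ s', (∑ s, d t s * Pmat τ π s s') * Φ s' := by
                apply Finset.sum_congr rfl; intro s' _; rw [Finset.sum_mul]
  -- g
  set g : ℝ := ∑' t : ℕ, γ₂ ^ t * u t with hg
  have hkey : γ₂ * ∑' t : ℕ, γ₂ ^ t * u (t+1) = g - u 0 := by
    rw [hg, Summable.tsum_eq_zero_add hsumu, pow_zero, one_mul]
    rw [← tsum_mul_left]
    have : ∀ t : ℕ, γ₂ ^ (t+1) * u (t+1) = γ₂ * (γ₂ ^ t * u (t+1)) := by intro t; ring
    rw [tsum_congr this]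
    ring
  have hJ : Jval τ ι γ₂ (fun s _ s' => γ₁ * Φ s' - Φ s) π
      = γ₁ * ∑' t : ℕ, γ₂ ^ t * u (t+1) - g := by
    unfold Jval
    rw [tsum_congr (fun t => by rw [hinner t]; ring_nf :
      ∀ t : ℕ, γ₂ ^ t * ∑ s, stateDist τ ι π t s * rvec τ (fun s _ s' => γ₁ * Φ s' - Φ s) π s
        = γ₁ * (γ₂ ^ t * u (t+1)) - γ₂ ^ t * u t)]
    rw [Summable.tsum_sub ((hsumu'.mul_left γ₁)) hsumu, tsum_mul_left]
  have hgocc : g = ∑ s, occ τ ι γ₂ π s * Φ s := by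
    rw [hg]
    have hs : ∀ s : S, Summable (fun t : ℕ => (γ₂ ^ t * d t s) * Φ s) :=
      fun s => (summable_occ τ ι h0 h1 hτ hι π s).mul_right _
    calc ∑' t : ℕ, γ₂ ^ t * u t
        = ∑' t : ℕ, ∑ s, (γ₂ ^ t * d t s) * Φ s := by
          apply tsum_congr; intro t
          rw [hu, Finset.mul_sum]
          apply Finset.sum_congr rfl; intro s _; ring
      _ = ∑ s, ∑' t : ℕ, (γ₂ ^ t * d t s) * Φ s := Summable.tsum_finsetSum (fun s _ => hs s)
      _ = ∑ s, occ τ ι γ₂ π s * Φ s := by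
          apply Finset.sum_congr rfl; intro s _
          rw [tsum_mul_right]; rfl
  have hu0 : u 0 = ∑ s, ι s * Φ s := by
    rw [hu]; simp only [hd, stateDist_zero]
  have hγ₂ : γ₂ ≠ 0 := ne_of_gt h0
  rw [hJ, ← hgocc, ← hu0]
  have : ∑' t : ℕ, γ₂ ^ t * u (t+1) = (g - u 0) / γ₂ := by
    field_simp
    linarith [hkey]
  rw [this]
  field_simp
  ring

end Jv

/-- Policy that agrees with `π` except at `s₀`, where it plays `a` deterministically. -/
noncomputable def detAt {S A : Type} [Fintype A] [DecidableEq S] [DecidableEq A]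
    (π : Policy S A) (s₀ : S) (a : A) : Policy S A :=
  ⟨fun s b => if s = s₀ then (if b = a then (1:ℝ) else 0) else π.1 s b, by
    intro s
    constructor
    · intro b
      dsimp only
      split
      · split <;> norm_num
      · exact (π.2 s).1 b
    · by_cases h : s = s₀
      · simp [h, Finset.sum_ite_eq']
      · simp only [if_neg h]
        exact (π.2 s).2⟩

theorem stmt_17 {S A : Type} [Fintype S] [DecidableEq S] [Fintype A]
    [Nonempty S] [Nonempty A]
    (γ₁ γ₂ : ℝ) (hγ₁0 : 0 < γ₁) (hγ₁1 : γ₁ < 1) (hγ₂0 : 0 < γ₂) (hγ₂1 : γ₂ < 1)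
    (τ : S → A → S → ℝ) (hτ : ∀ s a, IsProbVec (τ s a))
    (hnt : ∃ (s : S) (a a' : A), τ s a ≠ τ s a')
    (ι : S → ℝ) (hι : IsProbVec ι)
    (hreach : AllReachable τ ι)
    {X : Type} (f : (S → A → S → ℝ) → X)
    (hf : ∀ R₁ R₂ : S → A → S → ℝ, PotentialShaping γ₁ R₁ R₂ → f R₁ = f R₂)
    (hne : γ₁ ≠ γ₂) :
    ¬ PAdmissible (EquivOPT τ ι γ₂) f := by
  classical
  intro hadm
  obtain ⟨s₀, a, a', hnea⟩ := hnt
  have hdiff : ∃ s₁, τ s₀ a s₁ ≠ τ s₀ a' s₁ := by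
    by_contra h
    push_neg at h
    exact hnea (funext h)
  obtain ⟨s₁, hs₁⟩ := hdiff
  -- Step I: for every Φ, all policies give equal J-value to the shaped reward
  have hJeq : ∀ (Φ : S → ℝ) (π π' : Policy S A),
      Jval τ ι γ₂ (fun s _ s' => γ₁ * Φ s' - Φ s) π
        = Jval τ ι γ₂ (fun s _ s' => γ₁ * Φ s' - Φ s) π' := by
    intro Φ π π'
    have hps : PotentialShaping γ₁ (fun (_ : S) (_ : A) (_ : S) => (0:ℝ))
        (fun s _ s' => γ₁ * Φ s' - Φ s) :=
      ⟨Φ, fun s a s' => by ring⟩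
    have heq : EquivOPT τ ι γ₂ (fun _ _ _ => (0:ℝ)) (fun s _ s' => γ₁ * Φ s' - Φ s) :=
      hadm _ _ (hf _ _ hps)
    have hopt0 : ∀ ρ : Policy S A, IsOptimal τ ι γ₂ (fun _ _ _ => (0:ℝ)) ρ := by
      intro ρ ρ'
      rw [Jval_zero, Jval_zero]
    have h1 := (heq π).1 (hopt0 π) π'
    have h2 := (heq π').1 (hopt0 π') π
    linarith
  -- Step II: discounted weighted occupancy is policy independent
  have hcoef : γ₁ / γ₂ - 1 ≠ 0 := by
    intro h
    apply hne
    have : γ₁ / γ₂ = 1 := by linarith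
    field_simp at this
    linarith
  have hgeq : ∀ (Φ : S → ℝ) (π π' : Policy S A),
      ∑ s, occ τ ι γ₂ π s * Φ s = ∑ s, occ τ ι γ₂ π' s * Φ s := by
    intro Φ π π'
    have h := hJeq Φ π π'
    rw [Jval_shaping τ ι γ₁ hγ₂0 hγ₂1 hτ hι Φ π,
        Jval_shaping τ ι γ₁ hγ₂0 hγ₂1 hτ hι Φ π'] at h
    have h' : (γ₁ / γ₂ - 1) * (∑ s, occ τ ι γ₂ π s * Φ s - ∑ s, occ τ ι γ₂ π' s * Φ s) = 0 := by
      ring_nf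
      ring_nf at h
      linarith
    rcases mul_eq_zero.1 h' with h'' | h''
    · exact absurd h'' hcoef
    · linarith
  -- Step III: occupancy itself is policy independent
  have hocc : ∀ (π π' : Policy S A) (s : S), occ τ ι γ₂ π s = occ τ ι γ₂ π' s := by
    intro π π' s
    have h := hgeq (fun x => if x = s then 1 else 0) π π'
    simpa [mul_ite, Finset.sum_ite_eq'] using h
  -- Step IV: construct the two policies and a state with positive occupancy
  obtain ⟨πr, tr, hpos⟩ := hreach s₀
  set πa := detAt πr s₀ a with hπa
  set πa' := detAt πr s₀ a' with hπa'
  have hmpos : 0 < occ τ ι γ₂ πa s₀ := by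
    rw [hocc πa πr s₀]
    exact occ_pos τ ι hγ₂0 hγ₂1 hτ hι πr s₀ tr hpos
  -- Step V: occupancy recurrence gives contradiction
  have hra := occ_recur τ ι hγ₂0 hγ₂1 hτ hι πa s₁
  have hra' := occ_recur τ ι hγ₂0 hγ₂1 hτ hι πa' s₁
  have hocceq : ∀ s, occ τ ι γ₂ πa' s = occ τ ι γ₂ πa s := fun s => hocc πa' πa s
  rw [hocc πa' πa s₁] at hra'
  simp only [hocceq] at hra'
  have hsums : ∑ s, occ τ ι γ₂ πa s * Pmat τ πa s s₁ = ∑ s, occ τ ι γ₂ πa s * Pmat τ πa' s s₁ := by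
    have := hra.symm.trans hra'
    have hγ₂ : γ₂ ≠ 0 := ne_of_gt hγ₂0
    exact mul_left_cancel₀ hγ₂ (add_left_cancel this)
  have hrow : ∀ s, s ≠ s₀ → Pmat τ πa s s₁ = Pmat τ πa' s s₁ := by
    intro s hs
    simp only [Pmat, Matrix.of_apply, hπa, hπa', detAt, if_neg hs]
  have hPa : Pmat τ πa s₀ s₁ = τ s₀ a s₁ := by
    simp [hπa, Pmat, detAt, ite_mul, Finset.sum_ite_eq']
  have hPa' : Pmat τ πa' s₀ s₁ = τ s₀ a' s₁ := by
    simp [hπa', Pmat, detAt, ite_mul, Finset.sum_ite_eq']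
  have hdiffsum : ∑ s, occ τ ι γ₂ πa s * (Pmat τ πa s s₁ - Pmat τ πa' s s₁) = 0 := by
    rw [Finset.sum_congr rfl (fun s _ => by ring :
      ∀ s ∈ Finset.univ, occ τ ι γ₂ πa s * (Pmat τ πa s s₁ - Pmat τ πa' s s₁)
        = occ τ ι γ₂ πa s * Pmat τ πa s s₁ - occ τ ι γ₂ πa s * Pmat τ πa' s s₁)]
    rw [Finset.sum_sub_distrib, hsums, sub_self]
  have hsingle : occ τ ι γ₂ πa s₀ * (Pmat τ πa s₀ s₁ - Pmat τ πa' s₀ s₁) = 0 := by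
    rw [← hdiffsum]
    symm
    apply Finset.sum_eq_single s₀
    · intro s _ hs
      rw [hrow s hs, sub_self, mul_zero]
    · intro h
      exact absurd (Finset.mem_univ s₀) h
  rw [hPa, hPa'] at hsingle
  rcases mul_eq_zero.1 hsingle with h | h
  · exact absurd h (ne_of_gt hmpos)
  · exact hs₁ (sub_eq_zero.1 h)
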